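/- Let G be a nontrivial finite group and let H/K be an abelian chief factor of G. Then H/K is non-Frattini (i.e. the image of H in G/K is not contained in Frat(G/K)) if and only if H/K is complemented (i.e. there exists a subgroup U of G with UH = G and U ∩ H = K). -/

import Mathlib

/-- Let `G` be a nontrivial finite group and let `H/K` be an abelian chief factor of `G`.
Then `H/K` is non-Frattini (the image of `H` in `G/K` is not contained in `Frat(G/K)`)
if and only if `H/K` is complemented (there is a subgroup `U` of `G` with `UH = G` and
`U ∩ H = K`). -/
theorem abelian_chief_factor_nonFrattini_iff_complemented
    {G : Type*} [Group G] [Finite G] (hG : Nontrivial G)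
    (H K : Subgroup G) (hHnormal : H.Normal) (hKnormal : K.Normal)
    (hKH : K < H)
    (hchief : ∀ M : Subgroup G, M.Normal → K ≤ M → M ≤ H → M = K ∨ M = H)
    (habelian : ∀ a ∈ H, ∀ b ∈ H, a * b * a⁻¹ * b⁻¹ ∈ K) :
    ¬ (H.map (QuotientGroup.mk' K) ≤ frattini (G ⧸ K)) ↔
      ∃ U : Subgroup G, U ⊔ H = ⊤ ∧ U ⊓ H = K := by
  set π := QuotientGroup.mk' K with hπ
  have hπsurj : Function.Surjective π := QuotientGroup.mk'_surjective K
  have hker : π.ker = K := QuotientGroup.ker_mk' K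
  constructor
  · intro h
    -- obtain a maximal subgroup M of G/K not containing the image of H
    have : ∃ M : Subgroup (G ⧸ K), IsCoatom M ∧ ¬ H.map π ≤ M := by
      by_contra hc
      push_neg at hc
      exact h (le_iInf fun M => le_iInf fun hM => hc M hM)
    obtain ⟨M, hM, hHM⟩ := this
    refine ⟨M.comap π, ?_, ?_⟩
    · -- U ⊔ H = ⊤
      have hmap : (M.comap π ⊔ H).map π = ⊤ := by
        rw [Subgroup.map_sup, Subgroup.map_comap_eq_self_of_surjective hπsurj]
        exact hM.2 _ (lt_of_le_of_ne le_sup_left (fun he => hHM (he ▸ le_sup_right)))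
      have := congrArg (Subgroup.comap π) hmap
      rwa [Subgroup.comap_map_eq, hker, Subgroup.comap_top,
        sup_eq_left.mpr ((hKH.le).trans le_sup_right)] at this
    · -- U ⊓ H = K
      have hKle : K ≤ M.comap π ⊓ H := by
        refine le_inf (fun k hk => ?_) hKH.le
        simp only [Subgroup.mem_comap]
        have : π k = 1 := by rwa [← MonoidHom.mem_ker, hker]
        rw [this]; exact M.one_mem
      -- U ⊓ H is normalized by H (using abelianness) and by U
      have hHnorm : ∀ h ∈ H, ∀ x ∈ M.comap π ⊓ H, h * x * h⁻¹ ∈ M.comap π ⊓ H := by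
        intro h hh x hx
        have hxH : x ∈ H := hx.2
        have hcom : h * x * h⁻¹ * x⁻¹ ∈ K := habelian h hh x hxH
        have : h * x * h⁻¹ = (h * x * h⁻¹ * x⁻¹) * x := by group
        rw [this]
        exact Subgroup.mul_mem _ (hKle hcom) hx
      have hUnorm : ∀ u ∈ M.comap π, ∀ x ∈ M.comap π ⊓ H, u * x * u⁻¹ ∈ M.comap π ⊓ H := by
        intro u hu x hx
        exact ⟨Subgroup.mul_mem _ (Subgroup.mul_mem _ hu hx.1) (Subgroup.inv_mem _ hu),
          hHnormal.conj_mem x hx.2 u⟩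
      have hnormal : (M.comap π ⊓ H).Normal := by
        rw [← Subgroup.normalizer_eq_top_iff]
        have hU : M.comap π ≤ Subgroup.normalizer ((M.comap π ⊓ H : Subgroup G) : Set G) := by
          intro u hu
          rw [Subgroup.mem_normalizer_iff]
          intro x
          constructor
          · intro hx; exact hUnorm u hu x hx
          · intro hx
            have := hUnorm u⁻¹ (Subgroup.inv_mem _ hu) _ hx
            simpa [mul_assoc] using this
        have hH : H ≤ Subgroup.normalizer ((M.comap π ⊓ H : Subgroup G) : Set G) := by
          intro h hh
          rw [Subgroup.mem_normalizer_iff]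
          intro x
          constructor
          · intro hx; exact hHnorm h hh x hx
          · intro hx
            have := hHnorm h⁻¹ (Subgroup.inv_mem _ hh) _ hx
            simpa [mul_assoc] using this
        have hsup : M.comap π ⊔ H ≤ Subgroup.normalizer ((M.comap π ⊓ H : Subgroup G) : Set G) := sup_le hU hH
        have htop : M.comap π ⊔ H = ⊤ := by
          have hmap : (M.comap π ⊔ H).map π = ⊤ := by
            rw [Subgroup.map_sup, Subgroup.map_comap_eq_self_of_surjective hπsurj]
            exact hM.2 _ (lt_of_le_of_ne le_sup_left (fun he => hHM (he ▸ le_sup_right)))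
          have := congrArg (Subgroup.comap π) hmap
          rwa [Subgroup.comap_map_eq, hker, Subgroup.comap_top,
            sup_eq_left.mpr ((hKH.le).trans le_sup_right)] at this
        rw [htop] at hsup
        exact top_le_iff.mp hsup
      rcases hchief _ hnormal hKle inf_le_right with he | he
      · exact he
      · exfalso
        apply hHM
        have : H ≤ M.comap π := he ▸ inf_le_left
        calc H.map π ≤ (M.comap π).map π := Subgroup.map_mono this
          _ = M := Subgroup.map_comap_eq_self_of_surjective hπsurj M
  · rintro ⟨U, hsup, hinf⟩ hle
    -- image of U in G/K is proper
    have hKU : K ≤ U := hinf ▸ inf_le_left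
    have hUne : U.map π ≠ ⊤ := by
      intro he
      have := congrArg (Subgroup.comap π) he
      rw [Subgroup.comap_map_eq, hker, Subgroup.comap_top, sup_eq_left.mpr hKU] at this
      rw [this, top_inf_eq] at hinf
      exact hKH.ne' hinf
    have hmaptop : U.map π ⊔ H.map π = ⊤ := by
      rw [← Subgroup.map_sup, hsup, Subgroup.map_top_of_surjective _ hπsurj]
    apply hUne
    apply frattini_nongenerating
    exact top_le_iff.mp (hmaptop ▸ sup_le (le_sup_left) (hle.trans le_sup_right))
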